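/- Let ω₀ > 0 and ω₁ > 0 be real numbers and set ε = ω₀²/ω₁² − 1. Then the function b : ℝ → ℝ defined by b(t) = √(1 + ε·sin²(ω₁ t)) is twice differentiable, strictly positive, and satisfies the Ermakov–Pinney equation b''(t) + ω₁²·b(t) = ω₀² / b(t)³ for all t ∈ ℝ, together with the initial conditions b(0) = 1 and b'(0) = 0. -/

import Mathlib

/-- For `ω₀, ω₁ > 0` and `ε = ω₀²/ω₁² − 1`, the function
`b(t) = √(1 + ε sin²(ω₁ t))` is strictly positive, twice differentiable, and solves
the Ermakov–Pinney equation `b'' + ω₁² b = ω₀²/b³` with `b(0) = 1`, `b'(0) = 0`. -/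
theorem ermakov_pinney_frequency_quench
    (ω₀ ω₁ : ℝ) (h0 : 0 < ω₀) (h1 : 0 < ω₁)
    (b : ℝ → ℝ)
    (hb : b = fun t => Real.sqrt (1 + (ω₀ ^ 2 / ω₁ ^ 2 - 1) * Real.sin (ω₁ * t) ^ 2)) :
    (∀ t, 0 < b t) ∧
      ∃ b' b'' : ℝ → ℝ,
        (∀ t, HasDerivAt b (b' t) t) ∧
        (∀ t, HasDerivAt b' (b'' t) t) ∧
        (∀ t, b'' t + ω₁ ^ 2 * b t = ω₀ ^ 2 / (b t) ^ 3) ∧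
        b 0 = 1 ∧ b' 0 = 0 := by
  set ε : ℝ := ω₀ ^ 2 / ω₁ ^ 2 - 1 with hε
  set u : ℝ → ℝ := fun t => 1 + ε * Real.sin (ω₁ * t) ^ 2 with hu
  have hr : (0:ℝ) < ω₀ ^ 2 / ω₁ ^ 2 := by positivity
  have hεω : ω₁ ^ 2 * (ε + 1) = ω₀ ^ 2 := by
    rw [hε]; field_simp; ring
  have hupos : ∀ t, 0 < u t := by
    intro t
    have hpy := Real.sin_sq_add_cos_sq (ω₁ * t)
    simp only [hu, hε]
    nlinarith [sq_nonneg (Real.sin (ω₁ * t)), sq_nonneg (Real.cos (ω₁ * t)),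
      mul_nonneg hr.le (sq_nonneg (Real.sin (ω₁ * t)))]
  have hS : ∀ t, 0 < Real.sqrt (u t) := fun t => Real.sqrt_pos.mpr (hupos t)
  have hSne : ∀ t, Real.sqrt (u t) ≠ 0 := fun t => ne_of_gt (hS t)
  have hbt : ∀ t, b t = Real.sqrt (u t) := by intro t; rw [hb]
  have hbpos : ∀ t, 0 < b t := by intro t; rw [hbt]; exact hS t
  have hlin : ∀ t : ℝ, HasDerivAt (fun s : ℝ => ω₁ * s) ω₁ t := by
    intro t
    simpa using (hasDerivAt_id t).const_mul ω₁
  have hsin : ∀ t : ℝ, HasDerivAt (fun s : ℝ => Real.sin (ω₁ * s))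
      (Real.cos (ω₁ * t) * ω₁) t := fun t => (Real.hasDerivAt_sin (ω₁ * t)).comp t (hlin t)
  have hcos : ∀ t : ℝ, HasDerivAt (fun s : ℝ => Real.cos (ω₁ * s))
      (-Real.sin (ω₁ * t) * ω₁) t := fun t => (Real.hasDerivAt_cos (ω₁ * t)).comp t (hlin t)
  have hu' : ∀ t : ℝ, HasDerivAt u
      (2 * ε * ω₁ * Real.sin (ω₁ * t) * Real.cos (ω₁ * t)) t := by
    intro t
    have := (((hsin t).pow 2).const_mul ε).const_add 1
    convert this using 1
    · rfl
    · rfl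
    · rfl
    · push_cast; ring
  set v : ℝ → ℝ := fun t => ε * ω₁ * Real.sin (ω₁ * t) * Real.cos (ω₁ * t) with hv
  have hsqrt' : ∀ t, HasDerivAt (fun s => Real.sqrt (u s)) (v t / Real.sqrt (u t)) t := by
    intro t
    have h := (hu' t).sqrt (ne_of_gt (hupos t))
    convert h using 1
    rw [hv]
    field_simp
  set B' : ℝ → ℝ := fun t => v t / Real.sqrt (u t) with hB'
  have hb' : ∀ t, HasDerivAt b (B' t) t := by
    intro t
    rw [hb]
    exact hsqrt' t
  have hv' : ∀ t : ℝ, HasDerivAt v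
      (ε * ω₁ ^ 2 * (Real.cos (ω₁ * t) ^ 2 - Real.sin (ω₁ * t) ^ 2)) t := by
    intro t
    have := (((hsin t).mul (hcos t)).const_mul (ε * ω₁))
    convert this using 1
    · rfl
    · rfl
    · funext s; rw [hv]; simp only [Pi.mul_apply]; ring
    · ring
  set B'' : ℝ → ℝ := fun t =>
    (ε * ω₁ ^ 2 * (Real.cos (ω₁ * t) ^ 2 - Real.sin (ω₁ * t) ^ 2) * Real.sqrt (u t)
      - v t * (v t / Real.sqrt (u t))) / Real.sqrt (u t) ^ 2 with hB''
  have hb'' : ∀ t, HasDerivAt B' (B'' t) t := fun t =>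
    (hv' t).div (hsqrt' t) (hSne t)
  refine ⟨hbpos, B', B'', hb', hb'', ?_, ?_, ?_⟩
  · intro t
    set s := Real.sin (ω₁ * t) with hs
    set c := Real.cos (ω₁ * t) with hc
    set S := Real.sqrt (u t) with hSdef
    have hS2 : S ^ 2 = u t := Real.sq_sqrt (hupos t).le
    have hpy : s ^ 2 + c ^ 2 = 1 := Real.sin_sq_add_cos_sq (ω₁ * t)
    have hut : u t = 1 + ε * s ^ 2 := rfl
    have key : ε * ω₁ ^ 2 * (c ^ 2 - s ^ 2) * u t - (ε * ω₁ * s * c) ^ 2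
        + ω₁ ^ 2 * (u t) ^ 2 = ω₀ ^ 2 := by
      rw [hut]
      linear_combination (ε * ω₁ ^ 2) * hpy + hεω
    rw [hbt, hB'', hv]
    have hSne' : S ≠ 0 := hSne t
    field_simp
    rw [div_left_inj' (pow_ne_zero 3 hSne')]
    simp only [hs, hc, hSdef] at key hS2 ⊢
    linear_combination key
      + (ω₁ ^ 2 * ε * (Real.cos (ω₁ * t) ^ 2 - Real.sin (ω₁ * t) ^ 2) + ω₁ ^ 2 * (Real.sqrt (u t) ^ 2 + u t)) * hS2
  · rw [hbt]; simp [hu]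
  · rw [hB', hv]; simp
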